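/- Let S = {a_1, ..., a_n} be a factor-closed set of positive integers (i.e., every divisor of an element of S is in S). Then the determinant of the GCD matrix (gcd(a_i, a_j))_{1 ≤ i,j ≤ n} equals φ(a_1)·φ(a_2)···φ(a_n), where φ is Euler's totient function. -/
import Mathlib


/-- **Smith's theorem.** If `S` is a factor-closed set of positive integers, then the
determinant of the GCD matrix `(gcd aᵢ aⱼ)` equals the product of `φ(a)` over `a ∈ S`. -/
theorem smith_gcd_det (S : Finset ℕ) (hpos : ∀ a ∈ S, 0 < a)
    (hfc : ∀ a ∈ S, ∀ d, d ∣ a → d ∈ S) :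
    Matrix.det (Matrix.of fun i j : S => (Nat.gcd i j : ℤ)) =
      ∏ a ∈ S, (Nat.totient a : ℤ) := by
  classical
  set A : Matrix S S ℤ :=
    Matrix.of fun i j : S => if (j : ℕ) ∣ (i : ℕ) then (1 : ℤ) else 0 with hA
  set D : Matrix S S ℤ := Matrix.diagonal fun a : S => (Nat.totient (a : ℕ) : ℤ) with hD
  have hfac : (Matrix.of fun i j : S => (Nat.gcd i j : ℤ)) = A * D * A.transpose := by
    ext i j
    have h1 : (A * D * A.transpose) i j
        = ∑ k : S, A i k * (Nat.totient (k : ℕ) : ℤ) * A j k := by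
      rw [hD, Matrix.mul_apply]
      exact Finset.sum_congr rfl fun k _ => by
        rw [Matrix.mul_diagonal, Matrix.transpose_apply]
    rw [Matrix.of_apply, h1]
    have h2 : ∑ k : S, A i k * (Nat.totient (k : ℕ) : ℤ) * A j k
        = ∑ k ∈ S, (if k ∣ (i : ℕ) then (1:ℤ) else 0) * (Nat.totient k : ℤ)
            * (if k ∣ (j : ℕ) then (1:ℤ) else 0) := by
      rw [← Finset.sum_coe_sort S
        (fun k => (if k ∣ (i : ℕ) then (1:ℤ) else 0) * (Nat.totient k : ℤ)
            * (if k ∣ (j : ℕ) then (1:ℤ) else 0))]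
      rfl
    rw [h2]
    set g := Nat.gcd (i : ℕ) (j : ℕ) with hg
    have hgpos : 0 < g := Nat.gcd_pos_of_pos_left _ (hpos _ i.2)
    have hdiv : S.filter (fun k => k ∣ g) = g.divisors := by
      ext k
      simp only [Finset.mem_filter, Nat.mem_divisors]
      constructor
      · rintro ⟨_, hk⟩; exact ⟨hk, hgpos.ne'⟩
      · rintro ⟨hk, _⟩
        exact ⟨hfc _ i.2 _ (hk.trans (Nat.gcd_dvd_left _ _)), hk⟩
    have h3 : ∑ k ∈ S, (if k ∣ (i : ℕ) then (1:ℤ) else 0) * (Nat.totient k : ℤ)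
            * (if k ∣ (j : ℕ) then (1:ℤ) else 0)
        = ∑ k ∈ S.filter (fun k => k ∣ g), (Nat.totient k : ℤ) := by
      rw [Finset.sum_filter]
      apply Finset.sum_congr rfl
      intro k _
      by_cases h : k ∣ g
      · simp [h.trans (Nat.gcd_dvd_left _ _), h.trans (Nat.gcd_dvd_right _ _), h]
      · have : ¬ (k ∣ (i : ℕ)) ∨ ¬ (k ∣ (j : ℕ)) := by
          by_contra hc
          push_neg at hc
          exact h (Nat.dvd_gcd hc.1 hc.2)
        rcases this with h' | h' <;> simp [h', h]
    rw [h3, hdiv]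
    rw [← Nat.cast_sum, Nat.sum_totient]
  have hdetA : A.det = 1 := by
    have ht : A.BlockTriangular (OrderDual.toDual : S → Sᵒᵈ) := by
      intro i j hij
      have hij' : (i : ℕ) < (j : ℕ) := hij
      have : ¬ ((j : ℕ) ∣ (i : ℕ)) := fun h =>
        absurd (Nat.le_of_dvd (hpos _ i.2) h) (not_le.mpr hij')
      show (if ((j : ℕ) ∣ (i : ℕ)) then (1:ℤ) else 0) = 0
      rw [if_neg this]
    rw [Matrix.det_of_lowerTriangular A ht]
    apply Finset.prod_eq_one
    intro i _
    show (if ((i : ℕ) ∣ (i : ℕ)) then (1:ℤ) else 0) = 1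
    rw [if_pos dvd_rfl]
  rw [hfac, Matrix.det_mul, Matrix.det_mul, Matrix.det_transpose, hdetA,
    one_mul, mul_one, hD, Matrix.det_diagonal]
  rw [← Finset.prod_coe_sort S (fun a => (Nat.totient a : ℤ))]
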